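/- If R is a ring which is both a right p.p.-ring and a left p.p.-ring and which does not contain an infinite set of orthogonal idempotents, then every cyclic submodule of a torsion-free right R-module is projective. -/

import Mathlib

open MulOpposite

section Defs

variable (R : Type*) [Ring R]

/-- The right annihilator of an element of a right `R`-module (a module over `Rᵐᵒᵖ`),
as a right ideal of `R`. -/
def RightAnn (M : Type*) [AddCommGroup M] [Module Rᵐᵒᵖ M] (x : M) : Submodule Rᵐᵒᵖ R where
  carrier := {r : R | op r • x = 0}
  zero_mem' := by simp
  add_mem' := by
    intro a b ha hb
    simp only [Set.mem_setOf_eq] at *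
    rw [op_add, add_smul, ha, hb, add_zero]
  smul_mem' := by
    intro c a ha
    simp only [Set.mem_setOf_eq] at *
    have h1 : c • a = a * unop c := rfl
    rw [h1, op_mul, op_unop, mul_smul, ha, smul_zero]

/-- The right annihilator of a subset of `R`, as a set. -/
def rightAnnSet (A : Set R) : Set R := {r : R | ∀ a ∈ A, a * r = 0}

/-- The left annihilator of a subset of `R`, as a set. -/
def leftAnnSet (A : Set R) : Set R := {r : R | ∀ a ∈ A, r * a = 0}

/-- A submodule is essential if it intersects every nonzero submodule nontrivially. -/
def IsEssentialSubmodule {A : Type*} [Ring A] {M : Type*} [AddCommGroup M] [Module A M]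
    (U : Submodule A M) : Prop :=
  ∀ V : Submodule A M, U ⊓ V = ⊥ → V = ⊥

/-- A right `R`-module is non-singular if its singular submodule is zero, i.e. no
nonzero element has essential right annihilator. -/
def IsNonsingularMod (M : Type*) [AddCommGroup M] [Module Rᵐᵒᵖ M] : Prop :=
  ∀ x : M, IsEssentialSubmodule (RightAnn R M x) → x = 0

/-- A right `R`-module is singular if every element has essential right annihilator. -/
def IsSingularMod (M : Type*) [AddCommGroup M] [Module Rᵐᵒᵖ M] : Prop :=
  ∀ x : M, IsEssentialSubmodule (RightAnn R M x)

/-- Hattori torsion-freeness for right `R`-modules. -/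
def HattoriTorsionFree (M : Type*) [AddCommGroup M] [Module Rᵐᵒᵖ M] : Prop :=
  ∀ (x : M) (r : R), op r • x = 0 →
    ∃ (k : ℕ) (xs : Fin k → M) (rs : Fin k → R),
      x = ∑ i, op (rs i) • xs i ∧ ∀ i, rs i * r = 0

/-- A ring is torsion-free if every finitely generated right ideal is a torsion-free
right `R`-module. -/
def IsTorsionFreeRing : Prop :=
  ∀ I : Submodule Rᵐᵒᵖ R, I.FG → HattoriTorsionFree R I

/-- A ring is a right p.p.-ring if every principal right ideal is projective. -/
def IsRightPPRing : Prop :=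
  ∀ x : R, Module.Projective Rᵐᵒᵖ (Submodule.span Rᵐᵒᵖ ({x} : Set R))

/-- A ring is a left p.p.-ring if every principal left ideal is projective. -/
def IsLeftPPRing : Prop :=
  ∀ x : R, Module.Projective R (Submodule.span R ({x} : Set R))

/-- A ring is right semi-hereditary if every finitely generated right ideal is projective. -/
def IsRightSemihereditary : Prop :=
  ∀ I : Submodule Rᵐᵒᵖ R, I.FG → Module.Projective Rᵐᵒᵖ I

/-- `R` contains no infinite set of (nonzero, pairwise) orthogonal idempotents. -/
def NoInfiniteOrthogonalIdempotents : Prop :=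
  ∀ S : Set R, (∀ e ∈ S, e * e = e ∧ e ≠ 0) →
    (∀ e ∈ S, ∀ f ∈ S, e ≠ f → e * f = 0 ∧ f * e = 0) → S.Finite

/-- A ring is Baer if the right annihilator of every subset is generated, as a right
ideal, by an idempotent. -/
def IsBaerRing : Prop :=
  ∀ A : Set R, ∃ e : R, e * e = e ∧ rightAnnSet R A = {y : R | ∃ r : R, y = e * r}

/-- A ring is right Utumi if it is right non-singular and every S-closed right ideal
is a right annihilator. -/
def IsRightUtumi : Prop :=
  IsNonsingularMod R R ∧
    ∀ I : Submodule Rᵐᵒᵖ R, IsNonsingularMod R (R ⧸ I) →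
      ∃ A : Set R, (I : Set R) = rightAnnSet R A

/-- The left annihilator of an element of a left `R`-module, as a left ideal of `R`. -/
def LeftAnn (M : Type*) [AddCommGroup M] [Module R M] (x : M) : Submodule R R :=
  LinearMap.ker (LinearMap.toSpanSingleton R M x)

/-- A left `R`-module is non-singular if no nonzero element has essential left annihilator. -/
def IsLeftNonsingularMod (M : Type*) [AddCommGroup M] [Module R M] : Prop :=
  ∀ x : M, IsEssentialSubmodule (LeftAnn R M x) → x = 0

/-- A ring is left Utumi if it is left non-singular and every S-closed left ideal is a
left annihilator. -/
def IsLeftUtumi : Prop :=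
  IsLeftNonsingularMod R R ∧
    ∀ I : Submodule R R, IsLeftNonsingularMod R (R ⧸ I) →
      ∃ A : Set R, (I : Set R) = leftAnnSet R A

end Defs

section Aux

open MulOpposite

variable {R : Type*} [Ring R]

/-- `R` as a right module over itself is projective (as an `Rᵐᵒᵖ`-module). -/
lemma aux_proj_self : Module.Projective Rᵐᵒᵖ R := by
  refine Module.Projective.of_equiv (M := Rᵐᵒᵖ) (R := Rᵐᵒᵖ) (σ := RingHom.id Rᵐᵒᵖ) (σ' := RingHom.id Rᵐᵒᵖ) ?_
  exact
    { toFun := unop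
      invFun := op
      map_add' := fun a b => rfl
      map_smul' := fun m a => rfl
      left_inv := fun a => rfl
      right_inv := fun a => rfl }

/-- In a left p.p.-ring, the left annihilator of any element is generated
by an idempotent `w`. -/
lemma aux_lemA (hl : IsLeftPPRing R) (r : R) :
    ∃ w : R, w * w = w ∧ w * r = 0 ∧ ∀ s : R, s * r = 0 → s * w = s := by
  have hp := hl r
  rw [LinearMap.span_singleton_eq_range] at hp
  set π := (LinearMap.toSpanSingleton R R r).rangeRestrict with hπdef
  have hπsurj : Function.Surjective π := LinearMap.surjective_rangeRestrict _
  obtain ⟨σ, hσ⟩ := Module.projective_lifting_property π LinearMap.id hπsurj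
  have hσ' : ∀ y, π (σ y) = y := fun y => by
    have := congrArg (fun f => f y) hσ; simpa using this
  set c := σ (π 1) with hcdef
  have hπval : ∀ s : R,
      ((π s : LinearMap.range (LinearMap.toSpanSingleton R R r)) : R) = s * r :=
    fun s => by simp [hπdef, LinearMap.toSpanSingleton_apply, smul_eq_mul]
  have hπc : π c = π 1 := hσ' (π 1)
  have hcr : c * r = r := by
    have h := Subtype.ext_iff.mp hπc
    rw [hπval, hπval, one_mul] at h
    exact h
  have hsmul : ∀ s : R, s * c = σ (π s) := by
    intro s
    have h1 : s • (π (1 : R)) = π s := by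
      rw [← map_smul]; congr 1; simp
    show s * σ (π 1) = σ (π s)
    rw [← smul_eq_mul, ← map_smul, h1]
  have hkill : ∀ s : R, s * r = 0 → s * c = 0 := by
    intro s hs
    have h2 : π s = 0 := by
      apply Subtype.ext
      simpa [hπval] using hs
    rw [hsmul s, h2, map_zero]
  have hcc : c * c = c := by
    rw [hsmul c, hπc]
  refine ⟨1 - c, ?_, ?_, ?_⟩
  · rw [mul_sub, mul_one, sub_mul, one_mul, hcc]; abel
  · rw [sub_mul, one_mul, hcr, sub_self]
  · intro s hs
    rw [mul_sub, mul_one, hkill s hs, sub_zero]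

variable {M : Type*} [AddCommGroup M] [Module Rᵐᵒᵖ M]

/-- For a torsion-free module: every element of the annihilator of `x` absorbs an
idempotent lying in the annihilator of `x`. -/
lemma aux_star (hl : IsLeftPPRing R) (hM : HattoriTorsionFree R M)
    (x : M) (r : R) (hr : op r • x = 0) :
    ∃ f : R, f * f = f ∧ op f • x = 0 ∧ f * r = r := by
  obtain ⟨k, xs, rs, hx, hrs⟩ := hM x r hr
  obtain ⟨w, hw2, hwr, hws⟩ := aux_lemA hl r
  have hwx : op w • x = x := by
    conv_lhs => rw [hx]
    rw [Finset.smul_sum]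
    conv_rhs => rw [hx]
    refine Finset.sum_congr rfl fun i _ => ?_
    rw [smul_smul, ← op_mul, hws (rs i) (hrs i)]
  refine ⟨1 - w, ?_, ?_, ?_⟩
  · rw [mul_sub, mul_one, sub_mul, one_mul, hw2]; abel
  · rw [op_sub, sub_smul, op_one, one_smul, hwx, sub_self]
  · rw [sub_mul, one_mul, hwr, sub_zero]

/-- In a ring with no infinite orthogonal set of idempotents, every set of idempotents
containing `0` has a maximal element for the natural order on idempotents. -/
lemma aux_max (hno : NoInfiniteOrthogonalIdempotents R) (S : Set R)
    (hidem : ∀ e ∈ S, e * e = e) (h0 : (0 : R) ∈ S) :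
    ∃ e ∈ S, ∀ f ∈ S, e * f = e → f * e = e → f = e := by
  by_contra h
  push_neg at h
  have h' : ∀ e : {e : R // e ∈ S}, ∃ f : {e : R // e ∈ S},
      e.1 * f.1 = e.1 ∧ f.1 * e.1 = e.1 ∧ f.1 ≠ e.1 := by
    rintro ⟨e, he⟩
    obtain ⟨f, hfS, h1, h2, h3⟩ := h e he
    exact ⟨⟨f, hfS⟩, h1, h2, h3⟩
  choose F hF1 hF2 hF3 using h'
  let seq : ℕ → {e : R // e ∈ S} := fun n => Nat.rec ⟨0, h0⟩ (fun _ p => F p) n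
  have hseq_succ : ∀ n, seq (n + 1) = F (seq n) := fun n => rfl
  have hle1 : ∀ n, (seq n).1 * (seq (n + 1)).1 = (seq n).1 := fun n => hF1 (seq n)
  have hle2 : ∀ n, (seq (n + 1)).1 * (seq n).1 = (seq n).1 := fun n => hF2 (seq n)
  have hne : ∀ n, (seq (n + 1)).1 ≠ (seq n).1 := fun n => hF3 (seq n)
  have hmono : ∀ m n, n ≤ m →
      (seq n).1 * (seq m).1 = (seq n).1 ∧ (seq m).1 * (seq n).1 = (seq n).1 := by
    intro m
    induction m with
    | zero =>
      intro n hn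
      have : n = 0 := Nat.le_zero.mp hn
      subst this
      exact ⟨hidem _ (seq 0).2, hidem _ (seq 0).2⟩
    | succ m ih =>
      intro n hn
      rcases Nat.lt_or_ge n (m + 1) with hlt | hge
      · have hn' : n ≤ m := Nat.lt_succ_iff.mp hlt
        obtain ⟨ih1, ih2⟩ := ih n hn'
        constructor
        · calc (seq n).1 * (seq (m + 1)).1
              = ((seq n).1 * (seq m).1) * (seq (m + 1)).1 := by rw [ih1]
            _ = (seq n).1 * ((seq m).1 * (seq (m + 1)).1) := by rw [mul_assoc]
            _ = (seq n).1 * (seq m).1 := by rw [hle1 m]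
            _ = (seq n).1 := ih1
        · calc (seq (m + 1)).1 * (seq n).1
              = (seq (m + 1)).1 * ((seq m).1 * (seq n).1) := by rw [ih2]
            _ = ((seq (m + 1)).1 * (seq m).1) * (seq n).1 := by rw [mul_assoc]
            _ = (seq m).1 * (seq n).1 := by rw [hle2 m]
            _ = (seq n).1 := ih2
      · obtain rfl : n = m + 1 := le_antisymm hn hge
        exact ⟨hidem _ (seq (m + 1)).2, hidem _ (seq (m + 1)).2⟩
  set g : ℕ → R := fun n => (seq (n + 1)).1 - (seq n).1 with hg
  have hgidem : ∀ n, g n * g n = g n := by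
    intro n
    show ((seq (n + 1)).1 - (seq n).1) * ((seq (n + 1)).1 - (seq n).1)
        = (seq (n + 1)).1 - (seq n).1
    rw [mul_sub, sub_mul, sub_mul, hidem _ (seq (n + 1)).2, hidem _ (seq n).2,
      hle1 n, hle2 n]
    abel
  have hgne : ∀ n, g n ≠ 0 := by
    intro n hcon
    exact hne n (by rwa [sub_eq_zero] at hcon)
  have horth : ∀ n m, n < m → g n * g m = 0 ∧ g m * g n = 0 := by
    intro n m hnm
    have h1 : n + 1 ≤ m := hnm
    have h2 : n + 1 ≤ m + 1 := Nat.le_succ_of_le h1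
    have h3 : n ≤ m := Nat.le_of_lt hnm
    have h4 : n ≤ m + 1 := Nat.le_succ_of_le h3
    obtain ⟨hbd, hdb⟩ := hmono (m + 1) (n + 1) h2
    obtain ⟨hbc, hcb⟩ := hmono m (n + 1) h1
    obtain ⟨had, hda⟩ := hmono (m + 1) n h4
    obtain ⟨hac, hca⟩ := hmono m n h3
    constructor
    · show ((seq (n + 1)).1 - (seq n).1) * ((seq (m + 1)).1 - (seq m).1) = 0
      rw [mul_sub, sub_mul, sub_mul, hbd, hbc, had, hac]
      abel
    · show ((seq (m + 1)).1 - (seq m).1) * ((seq (n + 1)).1 - (seq n).1) = 0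
      rw [mul_sub, sub_mul, sub_mul, hdb, hda, hcb, hca]
      abel
  have hginj : Function.Injective g := by
    intro n m hnm
    by_contra hne'
    rcases Nat.lt_or_ge n m with hlt | hge
    · have := (horth n m hlt).1
      rw [hnm] at this
      rw [hgidem m] at this
      exact hgne m this
    · have hlt : m < n := lt_of_le_of_ne hge (Ne.symm hne')
      have := (horth m n hlt).1
      rw [hnm] at this
      rw [hgidem m] at this
      exact hgne m this
  have hfin := hno (Set.range g)
    (by
      rintro y ⟨n, rfl⟩
      exact ⟨hgidem n, hgne n⟩)
    (by
      rintro y ⟨n, rfl⟩ z ⟨m, rfl⟩ hyz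
      have hnm : n ≠ m := fun hc => hyz (by rw [hc])
      rcases Nat.lt_or_ge n m with hlt | hge
      · exact horth n m hlt
      · have hlt : m < n := lt_of_le_of_ne hge (Ne.symm hnm)
        exact ⟨(horth m n hlt).2, (horth m n hlt).1⟩)
  exact (Set.infinite_range_of_injective hginj) hfin

end Aux

/-- If `R` is a right and left p.p.-ring with no infinite set of orthogonal idempotents,
then every cyclic submodule of a torsion-free right `R`-module is projective. -/
theorem stmt_9 (R : Type*) [Ring R] (hr : IsRightPPRing R) (hl : IsLeftPPRing R)
    (hno : NoInfiniteOrthogonalIdempotents R)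
    (M : Type*) [AddCommGroup M] [Module Rᵐᵒᵖ M] (hM : HattoriTorsionFree R M) :
    ∀ x : M, Module.Projective Rᵐᵒᵖ (Submodule.span Rᵐᵒᵖ ({x} : Set M)) := by
  intro x
  classical
  -- The set of idempotents annihilating `x`
  set S : Set R := {e : R | e * e = e ∧ op e • x = 0} with hSdef
  have h0S : (0 : R) ∈ S := ⟨by rw [mul_zero], by rw [op_zero, zero_smul]⟩
  obtain ⟨e, heS, hemax⟩ := aux_max hno S (fun e he => he.1) h0S
  obtain ⟨he2, hex⟩ := heS
  -- Key lemma: the annihilator of `x` equals `eR`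
  have hK : ∀ r : R, op r • x = 0 → e * r = r := by
    intro r hrx
    set s : R := r - e * r with hsdef
    have hsx : op s • x = 0 := by
      rw [hsdef, op_sub, sub_smul, op_mul, mul_smul, hex, smul_zero, hrx, sub_zero]
    have hes : e * s = 0 := by
      rw [hsdef, mul_sub, ← mul_assoc e e r, he2, sub_self]
    by_contra hcon
    have hs0 : s ≠ 0 := by
      intro hc
      exact hcon (by rw [← sub_eq_zero]; rw [← neg_sub]; rw [hsdef] at hc; rw [hc, neg_zero])
    obtain ⟨f, hf2, hfx, hfs⟩ := aux_star hl hM x s hsx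
    set a : R := f - e * f with hadef
    have hax : op a • x = 0 := by
      rw [hadef, op_sub, sub_smul, op_mul, mul_smul, hex, smul_zero, hfx, sub_zero]
    have hea : e * a = 0 := by
      rw [hadef, mul_sub, ← mul_assoc e e f, he2, sub_self]
    have has : a * s = s := by
      rw [hadef, sub_mul, hfs, mul_assoc, hfs, hes, sub_zero]
    have ha0 : a ≠ 0 := by
      intro hc
      rw [hc, zero_mul] at has
      exact hs0 has.symm
    obtain ⟨f', hf'2, hf'x, hf'a⟩ := aux_star hl hM x a hax
    obtain ⟨w, hw2, hwa, hws⟩ := aux_lemA hl a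
    set u' : R := 1 - w with hu'def
    have hu'a : u' * a = a := by
      rw [hu'def, sub_mul, one_mul, hwa, sub_zero]
    have hfu' : f' * u' = u' := by
      have h1 : (1 - f') * a = 0 := by rw [sub_mul, one_mul, hf'a, sub_self]
      have h2 : w - f' * w = 1 - f' := by
        have := hws (1 - f') h1
        rwa [sub_mul, one_mul] at this
      have h3 : f' * w = w - (1 - f') := by
        rw [← h2]; abel
      rw [hu'def, mul_sub, mul_one, h3]
      abel
    have hu'x : op u' • x = 0 := by
      rw [← hfu', op_mul, mul_smul, hf'x, smul_zero]
    have heu' : e * u' = 0 := by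
      have h4 : e * w = e := hws e hea
      rw [hu'def, mul_sub, mul_one, h4, sub_self]
    have hu'2 : u' * u' = u' := by
      rw [hu'def, mul_sub, mul_one, sub_mul, one_mul, hw2]; abel
    set u : R := u' * (1 - e) with hudef
    have h1eu' : (1 - e) * u' = u' := by
      rw [sub_mul, one_mul, heu', sub_zero]
    have hu2 : u * u = u := by
      rw [hudef, mul_assoc, ← mul_assoc (1 - e), h1eu', ← mul_assoc, hu'2]
    have hue : u * e = 0 := by
      rw [hudef, mul_assoc, sub_mul 1 e e, one_mul, he2, sub_self, mul_zero]
    have heu : e * u = 0 := by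
      rw [hudef, ← mul_assoc, heu', zero_mul]
    have hua : u * a = a := by
      have h5 : (1 - e) * a = a := by rw [sub_mul, one_mul, hea, sub_zero]
      rw [hudef, mul_assoc, h5, hu'a]
    have hu0 : u ≠ 0 := by
      intro hc
      rw [hc, zero_mul] at hua
      exact ha0 hua.symm
    have hux : op u • x = 0 := by
      rw [hudef, op_mul, mul_smul, hu'x, smul_zero]
    set g : R := e + u with hgdef
    have hg2 : g * g = g := by
      rw [hgdef, mul_add, add_mul, add_mul, he2, hue, heu, hu2]
      abel
    have hgx : op g • x = 0 := by
      rw [hgdef, op_add, add_smul, hex, hux, add_zero]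
    have hge : g * e = e := by rw [hgdef, add_mul, he2, hue, add_zero]
    have heg : e * g = e := by rw [hgdef, mul_add, he2, heu, add_zero]
    have : g = e := hemax g ⟨hg2, hgx⟩ heg hge
    rw [hgdef] at this
    exact hu0 (by rwa [add_eq_left] at this)
  -- Now build the splitting of `R ↠ span {x}`, showing `span {x}` is a direct
  -- summand of `R` as a right module.
  set N := Submodule.span Rᵐᵒᵖ ({x} : Set M) with hNdef
  have hxN : x ∈ N := Submodule.mem_span_singleton_self x
  set pi : R →ₗ[Rᵐᵒᵖ] N :=
    { toFun := fun r => ⟨op r • x, Submodule.smul_mem _ _ hxN⟩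
      map_add' := fun r t => by
        apply Subtype.ext
        show op (r + t) • x = op r • x + op t • x
        rw [op_add, add_smul]
      map_smul' := fun m r => by
        apply Subtype.ext
        show op (m • r) • x = m • (op r • x)
        have h1 : m • r = r * unop m := rfl
        rw [h1, op_mul, op_unop, mul_smul] } with hpidef
  -- representative of an element of `N`
  have hrep : ∀ y : N, ∃ a : Rᵐᵒᵖ, a • x = (y : M) := fun y =>
    Submodule.mem_span_singleton.mp y.2
  choose rep hrepx using hrep
  have huniq : ∀ c d : Rᵐᵒᵖ, c • x = d • x →
      (1 - e) * unop c = (1 - e) * unop d := by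
    intro c d hcd
    have h1 : op (unop c - unop d) • x = 0 := by
      rw [op_sub, op_unop, op_unop, sub_smul, hcd, sub_self]
    have h2 := hK _ h1
    have h3 : (1 - e) * (unop c - unop d) = 0 := by
      rw [sub_mul, one_mul, h2, sub_self]
    rw [mul_sub, sub_eq_zero] at h3
    exact h3
  set i : N →ₗ[Rᵐᵒᵖ] R :=
    { toFun := fun y => (1 - e) * unop (rep y)
      map_add' := fun y z => by
        show (1 - e) * unop (rep (y + z)) =
          (1 - e) * unop (rep y) + (1 - e) * unop (rep z)
        have h1 : rep (y + z) • x = (rep y + rep z) • x := by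
          rw [add_smul, hrepx, hrepx, hrepx]
          rfl
        have h2 := huniq _ _ h1
        rw [h2, unop_add, mul_add]
      map_smul' := fun m y => by
        have h1 : rep (m • y) • x = (m * rep y) • x := by
          rw [mul_smul, hrepx, hrepx]
          rfl
        have h2 := huniq _ _ h1
        show (1 - e) * unop (rep (m • y)) = m • ((1 - e) * unop (rep y))
        have h3 : m • ((1 - e) * unop (rep y)) = ((1 - e) * unop (rep y)) * unop m := rfl
        rw [h2, h3, unop_mul, mul_assoc] } with hidef
  have hsplit : pi.comp i = LinearMap.id := by
    apply LinearMap.ext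
    intro y
    apply Subtype.ext
    show op ((1 - e) * unop (rep y)) • x = (y : M)
    rw [op_mul, op_unop, mul_smul]
    have h1 : op (1 - e) • x = x := by
      rw [op_sub, sub_smul, op_one, one_smul, hex, sub_zero]
    rw [h1, hrepx]
  haveI : Module.Projective Rᵐᵒᵖ R := aux_proj_self
  exact Module.Projective.of_split i pi hsplit
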